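/- The relation ≤ on words over {1,2}, defined by: x ≤ y if and only if, after deleting the longest common suffix of x and y, the number of 2's remaining in y is at least the total number of digits remaining in x, is a partial order (reflexive, antisymmetric, and transitive). -/

import Mathlib

inductive YFDigit : Type
  | one : YFDigit
  | two : YFDigit
  deriving DecidableEq, Repr

abbrev YFWord := List YFDigit

namespace YFWord

/-- value of a digit -/
def digitVal : YFDigit → ℕ
  | .one => 1
  | .two => 2

/-- digit sum of a word -/
def dsum (v : YFWord) : ℕ := (v.map digitVal).sum

/-- number of 2's in a word -/
def twos (v : YFWord) : ℕ := v.count YFDigit.two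

/-- longest common prefix of two lists -/
def commonPrefix : YFWord → YFWord → YFWord
  | a :: x, b :: y => if a = b then a :: commonPrefix x y else []
  | _, _ => []

/-- longest common suffix -/
def lcs (x y : YFWord) : YFWord := (commonPrefix x.reverse y.reverse).reverse

/-- the prefix of `x` remaining after deleting the longest common suffix of `x` and `y` -/
def rem (x y : YFWord) : YFWord := x.take (x.length - (lcs x y).length)

/-- the Young–Fibonacci order: x ≤ y iff, after removing the longest common suffix,
the remaining prefix of `y` has at least as many 2's as the remaining prefix of `x` has digits -/
def yfLE (x y : YFWord) : Prop := (rem x y).length ≤ twos (rem y x)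

/-- strict Young–Fibonacci order -/
def yfLT (x y : YFWord) : Prop := yfLE x y ∧ ¬ yfLE y x

/-- `y` covers `x` in the Young–Fibonacci order -/
def covers (x y : YFWord) : Prop := yfLT x y ∧ ∀ z, ¬ (yfLT x z ∧ yfLT z y)

end YFWord

namespace YFWord

theorem cp_comm : ∀ A B : YFWord, commonPrefix A B = commonPrefix B A
  | a :: x, b :: y => by
    simp only [commonPrefix]
    by_cases h : a = b
    · subst h; simp [cp_comm x y]
    · simp [h, Ne.symm h]
  | [], [] => rfl
  | [], _ :: _ => rfl
  | _ :: _, [] => rfl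

theorem cp_self : ∀ A : YFWord, commonPrefix A A = A
  | [] => rfl
  | a :: x => by simp [commonPrefix, cp_self x]

theorem cp_take : ∀ A B : YFWord, A.take (commonPrefix A B).length = commonPrefix A B
  | a :: x, b :: y => by
    by_cases h : a = b
    · simp [commonPrefix, h, cp_take x y]
    · simp [commonPrefix, h]
  | [], [] => rfl
  | [], _ :: _ => rfl
  | _ :: _, [] => rfl

theorem cp_length_le (A B : YFWord) : (commonPrefix A B).length ≤ A.length := by
  have := congrArg List.length (cp_take A B)
  rw [List.length_take] at this
  omega

theorem le_cp : ∀ (A B : YFWord) (n : ℕ), n ≤ A.length → A.take n = B.take n →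
    n ≤ (commonPrefix A B).length
  | _, _, 0, _, _ => Nat.zero_le _
  | [], _, n + 1, h, _ => by simp at h
  | a :: x, [], n + 1, h, he => by simp at he
  | a :: x, b :: y, n + 1, h, he => by
    simp only [List.take_succ_cons, List.cons.injEq] at he
    obtain ⟨rfl, he⟩ := he
    have := le_cp x y n (by simpa using h) he
    show n + 1 ≤ (if a = a then a :: commonPrefix x y else []).length
    rw [if_pos rfl]
    simp only [List.length_cons]
    omega

theorem twos_split (l : YFWord) (n : ℕ) : twos l = twos (l.take n) + twos (l.drop n) := by
  simp only [twos, ← List.count_append, List.take_append_drop]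

theorem twos_reverse (l : YFWord) : twos l.reverse = twos l := List.count_reverse

theorem twos_le_length (l : YFWord) : twos l ≤ l.length := List.count_le_length

theorem cp_take_eq (A B : YFWord) :
    A.take (commonPrefix A B).length = B.take (commonPrefix A B).length := by
  conv_lhs => rw [cp_take A B]
  rw [cp_comm A B]
  exact (cp_take B A).symm

theorem take_eq_mono {A B : YFWord} {m n : ℕ} (h : A.take n = B.take n) (hm : m ≤ n) :
    A.take m = B.take m := by
  have := congrArg (List.take m) h
  simpa [List.take_take, Nat.min_eq_left hm] using this

theorem twos_drop_split (l : YFWord) {m c : ℕ} (h : m ≤ c) :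
    twos (l.drop m) = twos ((l.take c).drop m) + twos (l.drop c) := by
  rw [twos_split (l.drop m) (c - m), List.drop_drop, List.drop_take,
    show m + (c - m) = c from by omega]

theorem twos_drop_le (l : YFWord) {m c : ℕ} (h : m ≤ c) :
    twos (l.drop m) ≤ (c - m) + twos (l.drop c) := by
  rw [twos_drop_split l h]
  have h1 := twos_le_length ((l.take c).drop m)
  have h2 : ((l.take c).drop m).length ≤ c - m := by
    simp only [List.length_drop, List.length_take]
    omega
  omega

theorem yfLE_iff (x y : YFWord) :
    yfLE x y ↔ x.length - (commonPrefix x.reverse y.reverse).length ≤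
      twos (y.reverse.drop (commonPrefix x.reverse y.reverse).length) := by
  have hky : (commonPrefix x.reverse y.reverse).length ≤ y.length := by
    rw [cp_comm]
    simpa using cp_length_le y.reverse x.reverse
  unfold yfLE rem lcs
  rw [cp_comm y.reverse x.reverse]
  simp only [List.length_reverse, List.length_take]
  have h1 : twos (y.take (y.length - (commonPrefix x.reverse y.reverse).length)) =
      twos (y.reverse.drop (commonPrefix x.reverse y.reverse).length) := by
    rw [← twos_reverse (y.take _), List.reverse_take,
      show y.length - (y.length - (commonPrefix x.reverse y.reverse).length)
        = (commonPrefix x.reverse y.reverse).length from by omega]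
  rw [h1]
  constructor <;> intro h <;> omega

end YFWord

open YFWord

theorem yf_partial_order :
    (∀ x : YFWord, yfLE x x) ∧
    (∀ x y : YFWord, yfLE x y → yfLE y x → x = y) ∧
    (∀ x y z : YFWord, yfLE x y → yfLE y z → yfLE x z) := by
  refine ⟨?_, ?_, ?_⟩
  · intro x
    rw [yfLE_iff, cp_self, List.length_reverse]
    simp
  · intro x y hxy hyx
    rw [yfLE_iff] at hxy hyx
    rw [cp_comm y.reverse x.reverse] at hyx
    set c := (commonPrefix x.reverse y.reverse).length with hc
    have hcx : c ≤ x.length := by simpa using cp_length_le x.reverse y.reverse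
    have hcy : c ≤ y.length := by
      rw [hc, cp_comm]; simpa using cp_length_le y.reverse x.reverse
    have hly : (y.reverse.drop c).length = y.length - c := by simp
    have hlx : (x.reverse.drop c).length = x.length - c := by simp
    have h2y := twos_le_length (y.reverse.drop c)
    have h2x := twos_le_length (x.reverse.drop c)
    rw [hly] at h2y; rw [hlx] at h2x
    have hlen : x.length = y.length := by omega
    rcases Nat.lt_or_ge c x.length with hlt | hge
    · exfalso
      have hYt : twos (y.reverse.drop c) = (y.reverse.drop c).length := by rw [hly]; omega
      have hXt : twos (x.reverse.drop c) = (x.reverse.drop c).length := by rw [hlx]; omega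
      have hallY : ∀ d ∈ y.reverse.drop c, YFDigit.two = d := List.count_eq_length.mp hYt
      have hallX : ∀ d ∈ x.reverse.drop c, YFDigit.two = d := List.count_eq_length.mp hXt
      have htake : ∀ (l : YFWord), 0 < l.length → (∀ d ∈ l, YFDigit.two = d) →
          l.take 1 = [YFDigit.two] := by
        intro l hl hall
        cases l with
        | nil => simp at hl
        | cons d t => simp [← hall d (by simp)]
      have hX1 : x.reverse.take (c + 1) = x.reverse.take c ++ [YFDigit.two] := by
        rw [List.take_add, htake _ (by simp; omega) hallX]
      have hY1 : y.reverse.take (c + 1) = y.reverse.take c ++ [YFDigit.two] := by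
        rw [List.take_add, htake _ (by simp; omega) hallY]
      have hcc : x.reverse.take c = y.reverse.take c := cp_take_eq x.reverse y.reverse
      have := le_cp x.reverse y.reverse (c + 1) (by simp; omega) (by rw [hX1, hY1, hcc])
      omega
    · have hcex : c = x.length := le_antisymm hcx hge
      have hX : x.reverse = x.reverse.take c := by
        rw [hcex, ← List.length_reverse (as := x)]; exact (List.take_length).symm
      have hY : y.reverse = y.reverse.take c := by
        rw [hcex, hlen, ← List.length_reverse (as := y)]; exact (List.take_length).symm
      have hrev : x.reverse = y.reverse :=
        hX.trans ((cp_take_eq x.reverse y.reverse).trans hY.symm)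
      exact List.reverse_injective hrev
  · intro x y z h1 h2
    rw [yfLE_iff] at h1 h2 ⊢
    set a := (commonPrefix x.reverse y.reverse).length with ha
    set b := (commonPrefix y.reverse z.reverse).length with hb
    set c := (commonPrefix x.reverse z.reverse).length with hcdef
    have haX : a ≤ x.length := by simpa using cp_length_le x.reverse y.reverse
    have haY : a ≤ y.length := by
      rw [ha, cp_comm]; simpa using cp_length_le y.reverse x.reverse
    have hbY : b ≤ y.length := by simpa using cp_length_le y.reverse z.reverse
    have hbZ : b ≤ z.length := by
      rw [hb, cp_comm]; simpa using cp_length_le z.reverse y.reverse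
    have hcX : c ≤ x.length := by simpa using cp_length_le x.reverse z.reverse
    have hcZ : c ≤ z.length := by
      rw [hcdef, cp_comm]; simpa using cp_length_le z.reverse x.reverse
    have hmc : min a b ≤ c := by
      rw [hcdef]
      apply le_cp
      · simp; omega
      · have t1 : x.reverse.take (min a b) = y.reverse.take (min a b) :=
          take_eq_mono (cp_take_eq x.reverse y.reverse) (Nat.min_le_left _ _)
        have t2 : y.reverse.take (min a b) = z.reverse.take (min a b) :=
          take_eq_mono (cp_take_eq y.reverse z.reverse) (Nat.min_le_right _ _)
        exact t1.trans t2
    have hL : x.length - min a b ≤ twos (z.reverse.drop (min a b)) := by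
      rcases le_total a b with hab | hba
      · rw [Nat.min_eq_left hab]
        have hYZ : y.reverse.take b = z.reverse.take b := cp_take_eq _ _
        have hsY := twos_drop_split y.reverse hab
        have hsZ := twos_drop_split z.reverse hab
        rw [hYZ] at hsY
        have h2Y : twos (y.reverse.drop b) ≤ y.length - b := by
          have := twos_le_length (y.reverse.drop b); simpa using this
        omega
      · rw [Nat.min_eq_right hba]
        have h2Y : twos (y.reverse.drop a) ≤ y.length - a := by
          have := twos_le_length (y.reverse.drop a); simpa using this
        omega
    have hfin := twos_drop_le z.reverse hmc
    omega
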